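/- For every real x with 657 ≤ x ≤ 1781, the maximum over y ∈ [45,84] of (y+1)·(x − (1/4)·[1 − 8y + ((8y+3)/3)^(3/2)]) equals ((w²+5)/8)·(x − 1 + w²/4 − w³/(4·3^(3/2))), where w > 0 is the unique positive real satisfying 5w³ − 12·√3·w² + 15w − 6·√3 = 24·√3·x, and the maximum is attained at y = (w² − 3)/8 ∈ [45,84]. -/

import Mathlib

lemma pow_threehalf (u : ℝ) (hu : 0 ≤ u) : (u ^ 2 : ℝ) ^ ((3 : ℝ) / 2) = u ^ 3 := by
  rw [← Real.rpow_natCast u 2, ← Real.rpow_mul hu,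
    show ((2 : ℕ) : ℝ) * (3 / 2) = ((3 : ℕ) : ℝ) by norm_num, Real.rpow_natCast]

set_option maxHeartbeats 1000000 in
theorem max_on_Icc_fortyfive_eightyfour (x : ℝ) (hx1 : 657 ≤ x) (hx2 : x ≤ 1781) :
    (∃! w : ℝ, 0 < w ∧
      5 * w ^ 3 - 12 * Real.sqrt 3 * w ^ 2 + 15 * w - 6 * Real.sqrt 3
        = 24 * Real.sqrt 3 * x) ∧
    ∀ w : ℝ, 0 < w →
      5 * w ^ 3 - 12 * Real.sqrt 3 * w ^ 2 + 15 * w - 6 * Real.sqrt 3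
        = 24 * Real.sqrt 3 * x →
      (w ^ 2 - 3) / 8 ∈ Set.Icc (45 : ℝ) 84 ∧
      IsGreatest
        ((fun y : ℝ =>
            (y + 1) * (x - (1 / 4) * (1 - 8 * y + ((8 * y + 3) / 3) ^ ((3 : ℝ) / 2)))) ''
          Set.Icc 45 84)
        (((w ^ 2 + 5) / 8) * (x - 1 + w ^ 2 / 4 - w ^ 3 / (4 * (3 : ℝ) ^ ((3 : ℝ) / 2)))) ∧
      IsMaxOn
        (fun y : ℝ =>
          (y + 1) * (x - (1 / 4) * (1 - 8 * y + ((8 * y + 3) / 3) ^ ((3 : ℝ) / 2))))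
        (Set.Icc 45 84) ((w ^ 2 - 3) / 8) := by
  set s := Real.sqrt 3 with hs_def
  have hs2 : s ^ 2 = 3 := Real.sq_sqrt (by norm_num)
  have hs0 : (0 : ℝ) < s := Real.sqrt_pos.mpr (by norm_num)
  have hs1 : (1 : ℝ) < s := by nlinarith
  have hs74 : s ≤ 7 / 4 := by nlinarith
  clear_value s
  set P : ℝ → ℝ := fun w => 5 * w ^ 3 - 12 * s * w ^ 2 + 15 * w - 6 * s with hP
  clear_value P
  -- strict monotonicity of P on [3, ∞)
  have hmono : StrictMonoOn P (Set.Ici 3) := by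
    intro a ha b hb hab
    rw [Set.mem_Ici] at ha hb
    have hbr : 0 < 5 * (a ^ 2 + a * b + b ^ 2) - 12 * s * (a + b) + 15 := by
      nlinarith [mul_nonneg (by linarith : (0:ℝ) ≤ a - 3) (by linarith : (0:ℝ) ≤ b - 3),
        mul_nonneg (by linarith : (0:ℝ) ≤ a - 3) (by linarith : (0:ℝ) ≤ a),
        mul_nonneg (by linarith : (0:ℝ) ≤ b - 3) (by linarith : (0:ℝ) ≤ b),
        mul_nonneg (by linarith : (0:ℝ) ≤ 7 / 4 - s) (by linarith : (0:ℝ) ≤ a + b)]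
    simp only [hP]
    nlinarith [mul_pos (sub_pos.2 hab) hbr]
  -- endpoint values
  have hP11 : P (11 * s) = 24 * s * 657 := by
    simp only [hP]; linear_combination (5203 * s) * hs2
  have hP15 : P (15 * s) = 24 * s * 1781 := by
    simp only [hP]; linear_combination (14175 * s) * hs2
  have h3le11s : (3 : ℝ) ≤ 11 * s := by nlinarith
  have hle : (11 : ℝ) * s ≤ 15 * s := by nlinarith
  -- existence via IVT
  have hPcont : ContinuousOn P (Set.Icc (11 * s) (15 * s)) := by
    simp only [hP]; fun_prop
  have hivt := intermediate_value_Icc hle hPcont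
  have hmem : 24 * s * x ∈ Set.Icc (P (11 * s)) (P (15 * s)) := by
    rw [hP11, hP15]
    constructor <;> nlinarith
  obtain ⟨w0, hw0mem, hw0eq⟩ := hivt hmem
  have hw0pos : 0 < w0 := by
    have := hw0mem.1; nlinarith
  -- any solution lies in [11s, 15s]
  have hrange : ∀ w : ℝ, 0 < w → P w = 24 * s * x → 11 * s ≤ w ∧ w ≤ 15 * s := by
    intro w hw hweq
    have hw3 : 3 < w := by
      by_contra h
      push_neg at h
      have : P w ≤ 180 := by simp only [hP]; nlinarith
      nlinarith
    constructor
    · by_contra h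
      push_neg at h
      have := hmono (Set.mem_Ici.2 hw3.le) (Set.mem_Ici.2 h3le11s) h
      rw [hweq, hP11] at this
      nlinarith
    · by_contra h
      push_neg at h
      have := hmono (Set.mem_Ici.2 (by linarith : (3:ℝ) ≤ 15 * s)) (Set.mem_Ici.2 hw3.le) h
      rw [hweq, hP15] at this
      nlinarith
  have huniq : ∀ w w' : ℝ, 0 < w → P w = 24 * s * x → 0 < w' → P w' = 24 * s * x → w' = w := by
    intro w w' hw hweq hw' hw'eq
    obtain ⟨h1, _⟩ := hrange w hw hweq
    obtain ⟨h1', _⟩ := hrange w' hw' hw'eq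
    exact hmono.injOn (Set.mem_Ici.2 (by linarith)) (Set.mem_Ici.2 (by linarith))
      (by rw [hweq, hw'eq])
  -- the rescaled objective
  set G : ℝ → ℝ := fun v => ((v ^ 2 + 5) / 8) * (x - 1 + v ^ 2 / 4 - v ^ 3 / (12 * s)) with hG
  have hs0' : s ≠ 0 := ne_of_gt hs0
  clear_value G
  have hderiv : ∀ v : ℝ, HasDerivAt G (v * (24 * s * x - P v) / (96 * s)) v := by
    intro v
    have ha : HasDerivAt (fun v : ℝ => (v ^ 2 + 5) / 8) (2 * v ^ 1 / 8) v :=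
      ((hasDerivAt_pow 2 v).add_const 5).div_const 8
    have hb : HasDerivAt (fun v : ℝ => x - 1 + v ^ 2 / 4 - v ^ 3 / (12 * s))
        (2 * v ^ 1 / 4 - 3 * v ^ 2 / (12 * s)) v :=
      (((hasDerivAt_pow 2 v).div_const 4).const_add (x - 1)).sub
        ((hasDerivAt_pow 3 v).div_const (12 * s))
    have := ha.mul hb
    rw [hG]; refine this.congr_deriv ?_
    simp only [hP]
    field_simp
    ring
  -- rpow identities
  have h3s : (3 : ℝ) ^ ((3 : ℝ) / 2) = 3 * s := by
    have h := pow_threehalf s hs0.le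
    rw [hs2] at h
    rw [h]
    linear_combination s * hs2
  -- change of variables: f y = G (sqrt (8y+3))
  have hchange : ∀ y : ℝ, 45 ≤ y → y ≤ 84 →
      (y + 1) * (x - (1 / 4) * (1 - 8 * y + ((8 * y + 3) / 3) ^ ((3 : ℝ) / 2)))
        = G (Real.sqrt (8 * y + 3)) ∧
      Real.sqrt (8 * y + 3) ∈ Set.Icc (11 * s) (15 * s) := by
    intro y hy1 hy2
    set v := Real.sqrt (8 * y + 3) with hv_def
    have hv0 : 0 ≤ v := Real.sqrt_nonneg _
    have hv2 : v ^ 2 = 8 * y + 3 := Real.sq_sqrt (by linarith)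
    clear_value v
    have hvl : 11 * s ≤ v := by nlinarith
    have hvu : v ≤ 15 * s := by nlinarith
    refine ⟨?_, hvl, hvu⟩
    have hkey : ((8 * y + 3) / 3 : ℝ) ^ ((3 : ℝ) / 2) = v ^ 3 / (3 * s) := by
      have huv : ((8 * y + 3) / 3 : ℝ) = (v / s) ^ 2 := by
        field_simp
        linear_combination (8 * y + 3) * hs2 - 3 * hv2
      rw [huv, pow_threehalf (v / s) (by positivity)]
      rw [div_pow]
      congr 1
      linear_combination s * hs2
    rw [hkey]
    have hy : y = (v ^ 2 - 3) / 8 := by linarith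
    rw [hy]
    simp only [hG]
    field_simp
    ring
  -- monotone / antitone pieces around each solution w
  have hGbig : ∀ w : ℝ, 0 < w → P w = 24 * s * x →
      ∀ v ∈ Set.Icc (11 * s) (15 * s), G v ≤ G w := by
    intro w hw hweq v hv
    obtain ⟨hwl, hwu⟩ := hrange w hw hweq
    rcases le_total v w with hvw | hvw
    · have hm : MonotoneOn G (Set.Icc (11 * s) w) := by
        apply monotoneOn_of_deriv_nonneg (convex_Icc _ _)
        · exact fun z _ => (hderiv z).continuousAt.continuousWithinAt
        · exact fun z _ => (hderiv z).differentiableAt.differentiableWithinAt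
        · intro z hz
          rw [interior_Icc, Set.mem_Ioo] at hz
          rw [(hderiv z).deriv]
          have hz0 : 0 < z := by nlinarith [hz.1]
          have hPz : P z ≤ P w := le_of_lt <| hmono (Set.mem_Ici.2 (by nlinarith [hz.1]))
            (Set.mem_Ici.2 (by linarith)) hz.2
          rw [hweq] at hPz
          have : 0 ≤ 24 * s * x - P z := by linarith
          positivity
      exact hm ⟨hv.1, hvw⟩ ⟨hwl, le_refl w⟩ hvw
    · have hm : AntitoneOn G (Set.Icc w (15 * s)) := by
        apply antitoneOn_of_deriv_nonpos (convex_Icc _ _)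
        · exact fun z _ => (hderiv z).continuousAt.continuousWithinAt
        · exact fun z _ => (hderiv z).differentiableAt.differentiableWithinAt
        · intro z hz
          rw [interior_Icc, Set.mem_Ioo] at hz
          rw [(hderiv z).deriv]
          have hz0 : 0 < z := by nlinarith [hz.1]
          have hPz : P w ≤ P z := le_of_lt <| hmono (Set.mem_Ici.2 (by linarith))
            (Set.mem_Ici.2 (by nlinarith [hz.1])) hz.1
          rw [hweq] at hPz
          have h1 : 24 * s * x - P z ≤ 0 := by linarith
          have h2 : 0 < 96 * s := by linarith
          apply div_nonpos_of_nonpos_of_nonneg (by nlinarith) (by linarith)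
      exact hm ⟨le_refl w, hwu⟩ ⟨hvw, hv.2⟩ hvw
  -- main per-w statement
  have key : ∀ w : ℝ, 0 < w → P w = 24 * s * x →
      (w ^ 2 - 3) / 8 ∈ Set.Icc (45 : ℝ) 84 ∧
      IsGreatest
        ((fun y : ℝ =>
            (y + 1) * (x - (1 / 4) * (1 - 8 * y + ((8 * y + 3) / 3) ^ ((3 : ℝ) / 2)))) ''
          Set.Icc 45 84)
        (((w ^ 2 + 5) / 8) * (x - 1 + w ^ 2 / 4 - w ^ 3 / (4 * (3 : ℝ) ^ ((3 : ℝ) / 2)))) ∧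
      IsMaxOn
        (fun y : ℝ =>
          (y + 1) * (x - (1 / 4) * (1 - 8 * y + ((8 * y + 3) / 3) ^ ((3 : ℝ) / 2))))
        (Set.Icc 45 84) ((w ^ 2 - 3) / 8) := by
    intro w hw hweq
    obtain ⟨hwl, hwu⟩ := hrange w hw hweq
    have hymem : (w ^ 2 - 3) / 8 ∈ Set.Icc (45 : ℝ) 84 := by
      constructor <;> nlinarith
    have hMG : (((w ^ 2 + 5) / 8) * (x - 1 + w ^ 2 / 4 - w ^ 3 / (4 * (3 : ℝ) ^ ((3 : ℝ) / 2))))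
        = G w := by
      rw [h3s]; simp only [hG]; ring
    have hfy : ((w ^ 2 - 3) / 8 + 1) * (x - (1 / 4) * (1 - 8 * ((w ^ 2 - 3) / 8)
        + ((8 * ((w ^ 2 - 3) / 8) + 3) / 3) ^ ((3 : ℝ) / 2))) = G w := by
      obtain ⟨heq, _⟩ := hchange ((w ^ 2 - 3) / 8) hymem.1 hymem.2
      rw [heq]
      congr 1
      rw [show (8 * ((w ^ 2 - 3) / 8) + 3 : ℝ) = w ^ 2 by ring, Real.sqrt_sq hw.le]
    refine ⟨hymem, ⟨⟨(w ^ 2 - 3) / 8, hymem, by beta_reduce; rw [hfy, hMG]⟩, ?_⟩, ?_⟩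
    · rintro z ⟨y, hy, rfl⟩
      beta_reduce
      obtain ⟨heq, hvmem⟩ := hchange y hy.1 hy.2
      rw [hMG, heq]
      exact hGbig w hw hweq _ hvmem
    · intro y hy
      obtain ⟨heq, hvmem⟩ := hchange y hy.1 hy.2
      simp only [Set.mem_setOf_eq]
      rw [hfy, heq]
      exact hGbig w hw hweq _ hvmem
  have hPapp : ∀ w : ℝ, P w = 5 * w ^ 3 - 12 * s * w ^ 2 + 15 * w - 6 * s := fun w => by
    rw [hP]
  refine ⟨⟨w0, ⟨hw0pos, by rw [← hPapp]; exact hw0eq⟩, ?_⟩,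
    fun w hw hweq => key w hw (by rw [hPapp]; exact hweq)⟩
  rintro w' ⟨hw', hw'eq⟩
  exact huniq w0 w' hw0pos hw0eq hw' (by rw [hPapp]; exact hw'eq)
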